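/- Fix v ≥ 1, let X := Fin v → Bool, n := 2^v, and let t ∈ X be the all-true valuation. Let (W, R) be a Kripke frame and let x : ℕ with x ≤ n - 2. Then the following are equivalent: (i) for every valuation assignment V : W → X and every world w : W with V w = t, either (t ∉ img(V,w) and img(V,w).ncard ≤ x) or t ∈ img(V,w) — i.e., the axiom α_K(x,*) of the system S_K(x,*) is valid on the frame; (ii) every world w satisfies: (¬R w w, and sees(w) is finite with sees(w).ncard ≤ x) or R w w. -/

import Mathlib

/-- Frame correspondence for the K-plane axiom `α_K(x,*)` of the system
`S_K(x,*)`: it is valid on a Kripke frame `(W, R)` iff every world `w` either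
is irreflexive and sees at most `x` worlds, or is reflexive. Here
`t = (fun _ => true)` is the all-true valuation, `img(V,w) = V '' {w' | R w w'}`,
and `x ≤ 2^v - 2`. -/
theorem alphaKstar_valid_iff_frame_condition (v : ℕ) (hv : 1 ≤ v) {W : Type*}
    (R : W → W → Prop) (x : ℕ) (hx : x ≤ 2 ^ v - 2) :
    (∀ (V : W → (Fin v → Bool)) (w : W), V w = (fun _ => true) →
      ((fun _ => true : Fin v → Bool) ∉ V '' {w' | R w w'} ∧
        (V '' {w' | R w w'}).ncard ≤ x) ∨
      (fun _ => true : Fin v → Bool) ∈ V '' {w' | R w w'}) ↔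
    (∀ w : W,
      (¬ R w w ∧ {w' | R w w'}.Finite ∧ {w' | R w w'}.ncard ≤ x) ∨ R w w) := by
  classical
  have h2 : 2 ≤ 2 ^ v := by
    calc 2 = 2 ^ 1 := rfl
    _ ≤ 2 ^ v := Nat.pow_le_pow_right (by norm_num) hv
  set t : Fin v → Bool := fun _ => true with ht
  constructor
  · intro h w
    by_cases hR : R w w
    · exact Or.inr hR
    left
    refine ⟨hR, ?_⟩
    by_contra hc
    -- get a finite subset S of sees(w) with ncard = x + 1
    obtain ⟨S, hSsub, hSfin, hScard⟩ :
        ∃ S ⊆ {w' | R w w'}, S.Finite ∧ S.ncard = x + 1 := by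
      by_cases hfin : {w' | R w w'}.Finite
      · have hgt : x + 1 ≤ {w' | R w w'}.ncard := by
          by_contra hle
          exact hc ⟨hfin, by omega⟩
        obtain ⟨S, hS1, hS2⟩ := Set.exists_subset_card_eq hgt
        exact ⟨S, hS1, hfin.subset hS1, hS2⟩
      · obtain ⟨S, hS1, hS2, hS3⟩ :=
          Set.Infinite.exists_subset_ncard_eq hfin (x + 1)
        exact ⟨S, hS1, hS2, hS3⟩
    -- an embedding from S into non-t valuations
    have hSf : Fintype ↥S := hSfin.fintype
    have hcardS : Fintype.card ↥S = x + 1 := by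
      rw [← Nat.card_coe_set_eq, Nat.card_eq_fintype_card] at hScard
      exact hScard
    have hcardT : Fintype.card {y : Fin v → Bool // y ≠ t} = 2 ^ v - 1 := by
      have := Fintype.card_subtype_compl (fun y : Fin v → Bool => y = t)
      simp only [Fintype.card_subtype_eq] at this
      simp only [Fintype.card_fun] at this
      simpa using this
    have hle : Fintype.card ↥S ≤ Fintype.card {y : Fin v → Bool // y ≠ t} := by
      rw [hcardS, hcardT]; omega
    obtain ⟨e⟩ := Function.Embedding.nonempty_iff_card_le.mpr hle
    -- the valuation
    set V : W → (Fin v → Bool) := fun u =>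
      if h : u ∈ S then (e ⟨u, h⟩).1 else if u = w then t else (fun _ => false)
      with hV
    have hwS : w ∉ S := fun h => hR (hSsub h)
    have hVw : V w = t := by simp [hV, hwS]
    have hfalse : (fun _ => false : Fin v → Bool) ≠ t := by
      intro h
      have := congrFun h ⟨0, hv⟩
      simp [ht] at this
    have htnotin : t ∉ V '' {w' | R w w'} := by
      rintro ⟨u, hu, hVu⟩
      have huw : u ≠ w := fun h => hR (h ▸ hu)
      by_cases huS : u ∈ S
      · rw [hV] at hVu; simp only [dif_pos huS] at hVu
        exact (e ⟨u, huS⟩).2 hVu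
      · rw [hV] at hVu; simp only [dif_neg huS, if_neg huw] at hVu
        exact hfalse hVu
    -- image has ncard ≥ x + 1
    have himg : V '' S ⊆ V '' {w' | R w w'} := Set.image_mono hSsub
    have hinj : Set.InjOn V S := by
      intro a ha b hb hab
      rw [hV] at hab
      simp only [dif_pos ha, dif_pos hb] at hab
      have := e.injective (Subtype.ext hab)
      exact Subtype.ext_iff.mp this
    have hcard1 : (V '' S).ncard = x + 1 := by
      rw [Set.ncard_image_of_injOn hinj, hScard]
    have hfin2 : (V '' {w' | R w w'}).Finite := Set.toFinite _
    have hge : x + 1 ≤ (V '' {w' | R w w'}).ncard := by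
      rw [← hcard1]; exact Set.ncard_le_ncard himg hfin2
    rcases h V w hVw with ⟨_, hle'⟩ | hmem
    · omega
    · exact htnotin hmem
  · intro h V w hVw
    rcases h w with ⟨hirr, hfin, hcard⟩ | hR
    · by_cases hmem : t ∈ V '' {w' | R w w'}
      · exact Or.inr hmem
      · exact Or.inl ⟨hmem, le_trans (Set.ncard_image_le hfin) hcard⟩
    · exact Or.inr ⟨w, hR, hVw⟩
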